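/- arXiv:2206.05933 — 3 statements merged into one kernel-verified Lean document; each statement's English description precedes it below -/
import Mathlib

section
/- For integers n ≥ 1 and p ≥ 1, the p-variation norm of the function t ↦ cos(nπt) − 1 on [0,1] equals 2 n^{1/p}; that is, the supremum over all finite partitions 0 = t_0 < t_1 < ... < t_N = 1 of (Σ_i |cos(nπ t_i) − cos(nπ t_{i-1})|^p)^{1/p} equals 2 n^{1/p}. -/
open Real intervalIntegral

lemma abs_sin_periodic : Function.Periodic (fun x => |Real.sin x|) π := fun x => by
  simp [Real.sin_antiperiodic x]

lemma int_abs_sin (n : ℕ) : ∫ x in (0:ℝ)..(n*π), |Real.sin x| = 2 * n := by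
  have hint : ∀ t₁ t₂ : ℝ, IntervalIntegrable (fun x => |Real.sin x|) MeasureTheory.volume t₁ t₂ :=
    fun t₁ t₂ => (Real.continuous_sin.abs).intervalIntegrable t₁ t₂
  have h := abs_sin_periodic.intervalIntegral_add_zsmul_eq (n : ℤ) 0 hint
  have h1 : ∫ x in (0:ℝ)..π, |Real.sin x| = 2 := by
    rw [intervalIntegral.integral_congr (g := Real.sin)]
    · rw [integral_sin]; norm_num
    · intro x hx
      rw [Set.uIcc_of_le Real.pi_nonneg] at hx
      exact abs_of_nonneg (Real.sin_nonneg_of_nonneg_of_le_pi hx.1 hx.2)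
  rw [zero_add, zero_add, h1] at h
  simpa [zsmul_eq_mul, mul_comm] using h

noncomputable def Fv (n : ℕ) (x : ℝ) : ℝ := ∫ s in (0:ℝ)..x, n * π * |Real.sin (n * π * s)|

lemma Fv_cont_integrand (n : ℕ) : Continuous (fun s : ℝ => (n:ℝ) * π * |Real.sin (n * π * s)|) := by
  continuity

lemma cos_diff_le (n : ℕ) {a b : ℝ} (hab : a ≤ b) :
    |Real.cos (n * π * b) - Real.cos (n * π * a)| ≤ Fv n b - Fv n a := by
  have hInt : ∀ t₁ t₂ : ℝ, IntervalIntegrable (fun s : ℝ => (n:ℝ) * π * |Real.sin (n * π * s)|)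
      MeasureTheory.volume t₁ t₂ := fun t₁ t₂ => (Fv_cont_integrand n).intervalIntegrable t₁ t₂
  have hFba : Fv n b - Fv n a = ∫ s in a..b, (n:ℝ) * π * |Real.sin (n * π * s)| := by
    rw [Fv, Fv, ← intervalIntegral.integral_add_adjacent_intervals (hInt 0 a) (hInt a b)]
    ring
  have hderiv : ∀ x ∈ Set.uIcc a b,
      HasDerivAt (fun t : ℝ => Real.cos (n * π * t)) (-((n:ℝ) * π * Real.sin (n * π * x))) x := by
    intro x _
    have h1 : HasDerivAt (fun t : ℝ => (n:ℝ) * π * t) ((n:ℝ) * π) x := by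
      simpa using (hasDerivAt_id x).const_mul ((n:ℝ) * π)
    have := (Real.hasDerivAt_cos ((n:ℝ) * π * x)).comp x h1
    rw [show -((n:ℝ) * π * Real.sin (n * π * x)) = -Real.sin (n * π * x) * (n * π) by ring]
    exact this
  have heq : ∫ s in a..b, -((n:ℝ) * π * Real.sin (n * π * s)) =
      Real.cos (n * π * b) - Real.cos (n * π * a) :=
    intervalIntegral.integral_eq_sub_of_hasDerivAt hderiv
      ((by continuity : Continuous (fun s : ℝ => -((n:ℝ) * π * Real.sin (n * π * s)))).intervalIntegrable a b)
  rw [← heq, hFba]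
  calc |∫ s in a..b, -((n:ℝ) * π * Real.sin (n * π * s))|
        ≤ ∫ s in a..b, |(-((n:ℝ) * π * Real.sin (n * π * s)))| :=
          intervalIntegral.abs_integral_le_integral_abs hab
    _ = ∫ s in a..b, (n:ℝ) * π * |Real.sin (n * π * s)| := by
          apply intervalIntegral.integral_congr
          intro x _
          simp only [abs_neg, abs_mul, abs_of_nonneg (by positivity : (0:ℝ) ≤ (n:ℝ) * π)]

lemma Fv_one (n : ℕ) (hn : 1 ≤ n) : Fv n 1 = 2 * n := by
  have hc : (n:ℝ) * π ≠ 0 := by positivity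
  rw [Fv, intervalIntegral.integral_const_mul,
    intervalIntegral.integral_comp_mul_left (fun x => |Real.sin x|) hc]
  rw [mul_zero, mul_one, smul_eq_mul, int_abs_sin n]
  field_simp

lemma fin_telescope (g : ℕ → ℝ) (N : ℕ) :
    ∑ i : Fin N, (g (i.val + 1) - g i.val) = g N - g 0 := by
  rw [Fin.sum_univ_eq_sum_range (fun k => g (k+1) - g k) N, Finset.sum_range_sub]

lemma cos_nat_pi (k : ℕ) : Real.cos (k * π) = (-1 : ℝ) ^ k := by
  induction k with
  | zero => simp
  | succ m ih =>
    have : ((m+1 : ℕ) : ℝ) * π = m * π + π := by push_cast; ring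
    rw [this, Real.cos_antiperiodic (m * π), ih, pow_succ]
    ring

/-- The set of `p`-variation partition sums of a function `f` on `[0,1]`:
values `(∑ i |f(t_i) - f(t_{i-1})|^p)^{1/p}` over finite partitions
`0 = t_0 < t_1 < ... < t_N = 1`. -/
def pVarSums (p : ℝ) (f : ℝ → ℝ) : Set ℝ :=
  {x : ℝ | ∃ (N : ℕ) (t : Fin (N + 1) → ℝ), StrictMono t ∧ t 0 = 0 ∧ t (Fin.last N) = 1 ∧
    x = (∑ i : Fin N, |f (t i.succ) - f (t i.castSucc)| ^ p) ^ (1 / p)}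

/-- For integers `n ≥ 1` and `p ≥ 1`, the `p`-variation norm of
`t ↦ cos (n π t) - 1` on `[0,1]` equals `2 n^{1/p}`. -/
theorem stmt_0 (n p : ℕ) (hn : 1 ≤ n) (hp : 1 ≤ p) :
    sSup (pVarSums (p : ℝ) (fun t => Real.cos (n * Real.pi * t) - 1)) =
      2 * (n : ℝ) ^ ((1 : ℝ) / p) := by
  have hn0 : (0:ℝ) < n := by exact_mod_cast hn
  have hp0 : (p:ℝ) ≠ 0 := by positivity
  have hppos : (0:ℝ) ≤ 1 / p := by positivity
  -- the target value, as (2^p * n)^(1/p)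
  have hval : ((2:ℝ) ^ p * n) ^ ((1:ℝ)/p) = 2 * (n:ℝ) ^ ((1:ℝ)/p) := by
    rw [Real.mul_rpow (by positivity) (le_of_lt hn0)]
    congr 1
    rw [← Real.rpow_natCast 2 p, ← Real.rpow_mul (by norm_num), mul_one_div,
      div_self hp0, Real.rpow_one]
  -- upper bound
  have hub : ∀ x ∈ pVarSums (p : ℝ) (fun t => Real.cos (n * Real.pi * t) - 1),
      x ≤ 2 * (n:ℝ) ^ ((1:ℝ)/p) := by
    rintro x ⟨N, t, hmono, h0, h1, rfl⟩
    rw [← hval]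
    apply Real.rpow_le_rpow (Finset.sum_nonneg fun i _ => Real.rpow_nonneg (abs_nonneg _) _) _ hppos
    -- bound the sum by 2^p * n
    have key : ∀ i : Fin N,
        |((fun t => Real.cos (n * π * t) - 1) (t i.succ)) -
          ((fun t => Real.cos (n * π * t) - 1) (t i.castSucc))| ^ (p:ℝ)
        ≤ 2 ^ (p-1) * (Fv n (t i.succ) - Fv n (t i.castSucc)) := by
      intro i
      have hle : t i.castSucc ≤ t i.succ := le_of_lt (hmono (Fin.castSucc_lt_succ (i := i)))
      have hd : |Real.cos (n * π * (t i.succ)) - Real.cos (n * π * (t i.castSucc))|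
          ≤ Fv n (t i.succ) - Fv n (t i.castSucc) := cos_diff_le n hle
      set D := |Real.cos (n * π * (t i.succ)) - Real.cos (n * π * (t i.castSucc))| with hD
      have hsimp : |((fun t => Real.cos (n * π * t) - 1) (t i.succ)) -
          ((fun t => Real.cos (n * π * t) - 1) (t i.castSucc))| = D := by
        simp only [hD, sub_sub_sub_cancel_right]
      rw [hsimp, Real.rpow_natCast]
      have hD2 : D ≤ 2 := by
        apply (abs_sub _ _).trans
        have := Real.abs_cos_le_one (n * π * (t i.succ))
        have := Real.abs_cos_le_one (n * π * (t i.castSucc))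
        linarith
      have hDnn : 0 ≤ D := abs_nonneg _
      calc D ^ p = D ^ (p - 1) * D := by
              rw [← pow_succ]; congr 1; omega
        _ ≤ 2 ^ (p-1) * (Fv n (t i.succ) - Fv n (t i.castSucc)) :=
              mul_le_mul (pow_le_pow_left₀ hDnn hD2 _) hd hDnn (by positivity)
    calc (∑ i : Fin N, |((fun t => Real.cos (n * π * t) - 1) (t i.succ)) -
            ((fun t => Real.cos (n * π * t) - 1) (t i.castSucc))| ^ (p:ℝ))
        ≤ ∑ i : Fin N, 2 ^ (p-1) * (Fv n (t i.succ) - Fv n (t i.castSucc)) :=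
          Finset.sum_le_sum fun i _ => key i
      _ = 2 ^ (p-1) * ∑ i : Fin N, (Fv n (t i.succ) - Fv n (t i.castSucc)) := by
          rw [Finset.mul_sum]
      _ = 2 ^ (p-1) * (2 * n) := by
          congr 1
          have htel : ∑ i : Fin N, (Fv n (t i.succ) - Fv n (t i.castSucc))
              = Fv n (t (Fin.last N)) - Fv n (t 0) := by
            set g : ℕ → ℝ := fun k => Fv n (t ⟨min k N, by omega⟩) with hg
            have hstep : ∀ i : Fin N, Fv n (t i.succ) - Fv n (t i.castSucc) =
                g (i.val + 1) - g i.val := by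
              intro i
              have h1 : (⟨min (i.val+1) N, by omega⟩ : Fin (N+1)) = i.succ := by
                ext; simp [Nat.min_eq_left i.isLt]
              have h2 : (⟨min i.val N, by omega⟩ : Fin (N+1)) = i.castSucc := by
                ext; simp [Nat.min_eq_left (le_of_lt i.isLt)]
              simp only [hg, h1, h2]
            rw [Finset.sum_congr rfl (fun i _ => hstep i), fin_telescope g N]
            have hN : (⟨min N N, by omega⟩ : Fin (N+1)) = Fin.last N := by
              ext; simp [Fin.last]
            have h00 : (⟨min 0 N, by omega⟩ : Fin (N+1)) = 0 := by
              ext; simp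
            simp only [hg, hN, h00]
          rw [htel, h0, h1, Fv_one n hn]
          have : Fv n 0 = 0 := by simp [Fv]
          rw [this, sub_zero]
      _ = 2 ^ p * n := by
          rw [← mul_assoc]
          congr 1
          rw [← pow_succ]
          congr 1
          omega
  -- the witness partition
  have hmem : 2 * (n:ℝ) ^ ((1:ℝ)/p) ∈
      pVarSums (p : ℝ) (fun t => Real.cos (n * Real.pi * t) - 1) := by
    refine ⟨n, fun i => (i : ℕ) / n, ?_, by simp, ?_, ?_⟩
    · intro i j hij
      exact div_lt_div_of_pos_right (by exact_mod_cast hij) hn0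
    · simp only [Fin.val_last]
      field_simp
    · have hterm : ∀ i : Fin n,
          |((fun t => Real.cos (n * π * t) - 1) (((i.succ : Fin (n+1)) : ℕ) / (n:ℝ))) -
            ((fun t => Real.cos (n * π * t) - 1) (((i.castSucc : Fin (n+1)) : ℕ) / (n:ℝ)))| ^ (p:ℝ)
          = 2 ^ p := by
        intro i
        have e1 : (n:ℝ) * π * (((i.succ : Fin (n+1)) : ℕ) / (n:ℝ)) = ((i:ℕ)+1 : ℕ) * π := by
          field_simp
          simp [Fin.val_succ]
        have e2 : (n:ℝ) * π * (((i.castSucc : Fin (n+1)) : ℕ) / (n:ℝ)) = ((i:ℕ) : ℕ) * π := by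
          field_simp
          simp
        simp only [sub_sub_sub_cancel_right, e1, e2, cos_nat_pi]
        rw [pow_succ]
        have : |(-1:ℝ) ^ (i:ℕ) * -1 - (-1:ℝ) ^ (i:ℕ)| = 2 := by
          rcases neg_one_pow_eq_one_iff_even (R := ℝ) (by norm_num) |>.mpr.mt with _
          rcases Nat.even_or_odd (i:ℕ) with h | h
          · rw [h.neg_one_pow]; norm_num
          · rw [h.neg_one_pow]; norm_num
        rw [this, Real.rpow_natCast]
      rw [Finset.sum_congr rfl (fun i _ => hterm i), Finset.sum_const, Finset.card_univ,
        Fintype.card_fin, nsmul_eq_mul]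
      rw [show ((n:ℝ) * 2^p) ^ ((1:ℝ)/p) = 2 * (n:ℝ) ^ ((1:ℝ)/p) by
        rw [mul_comm]; exact hval]
  exact le_antisymm (csSup_le ⟨_, hmem⟩ hub) (le_csSup ⟨_, hub⟩ hmem)
end

section
/- For integers n ≥ 1 and p ≥ 1, the p-variation norm of t ↦ sin(nπt) on [0,1] is at most C (1/2^p + n)^{1/p} for some constant C independent of n; in particular ‖sin(nπ·)‖_{p-var} ≤ C (1+n)^{1/p}. -/
open Real

open Fin.NatCast in
lemma fin_telescope_s1 {N : ℕ} (t : Fin (N + 1) → ℝ) :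
    ∑ i : Fin N, (t i.succ - t i.castSucc) = t (Fin.last N) - t 0 := by
  have h := Finset.sum_range_sub (fun i : ℕ => t i) N
  have h2 : ∑ i : Fin N, (t i.succ - t i.castSucc)
      = ∑ i ∈ Finset.range N, (t ↑(i + 1) - t ↑i) := by
    rw [← Fin.sum_univ_eq_sum_range (fun i : ℕ => t ↑(i+1) - t ↑i) N]
    refine Finset.sum_congr rfl fun i _ => ?_
    congr 1
    · congr 1
      ext
      simp [Fin.val_cast_of_lt (Nat.succ_lt_succ i.isLt)]
    · congr 1
      ext
      simp [Fin.val_cast_of_lt (Nat.lt_succ_of_lt i.isLt)]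
  rw [h2, h]
  congr 2
  ext; simp [Fin.val_cast_of_lt (Nat.lt_succ_self N), Fin.last]

lemma abs_sin_sub_sin_le' (a b : ℝ) : |Real.sin a - Real.sin b| ≤ |a - b| := by
  rw [Real.sin_sub_sin, abs_mul, abs_mul]
  have h1 : |Real.sin ((a - b) / 2)| ≤ |(a - b) / 2| := Real.abs_sin_le_abs
  have h2 : |Real.cos ((a + b) / 2)| ≤ 1 := Real.abs_cos_le_one _
  calc |(2:ℝ)| * |Real.sin ((a - b) / 2)| * |Real.cos ((a + b) / 2)|
      ≤ |(2:ℝ)| * |(a - b) / 2| * 1 := by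
        refine mul_le_mul (mul_le_mul_of_nonneg_left h1 (abs_nonneg _)) h2
          (abs_nonneg _) (by positivity)
    _ = |a - b| := by rw [abs_div, abs_two, mul_one]; field_simp

/-- For integers `n ≥ 1` and `p ≥ 1`, the `p`-variation norm of `t ↦ sin (n π t)` on `[0,1]`
is at most `C (1/2^p + n)^{1/p}` for a constant `C` independent of `n`; in particular it is
at most `C (1+n)^{1/p}`. -/
theorem stmt_1 (p : ℕ) (hp : 1 ≤ p) :
    ∃ C > (0 : ℝ), ∀ n : ℕ, 1 ≤ n →
      sSup (pVarSums (p : ℝ) (fun t => Real.sin (n * Real.pi * t))) ≤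
          C * ((1 / 2 ^ p : ℝ) + n) ^ ((1 : ℝ) / p) ∧
      sSup (pVarSums (p : ℝ) (fun t => Real.sin (n * Real.pi * t))) ≤
          C * ((1 : ℝ) + n) ^ ((1 : ℝ) / p) := by
  have hp0 : (0:ℝ) < (p:ℝ) := by positivity
  have pne : (p:ℝ) ≠ 0 := ne_of_gt hp0
  have hip : (0:ℝ) ≤ 1 / (p:ℝ) := by positivity
  refine ⟨4, by norm_num, fun n hn => ?_⟩
  set B : ℝ := (1 / 2 ^ p : ℝ) + n with hB
  have hBnn : (0:ℝ) ≤ B := by positivity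
  have key : sSup (pVarSums (p : ℝ) (fun t => Real.sin (n * Real.pi * t)))
      ≤ 4 * B ^ ((1:ℝ)/p) := by
    refine Real.sSup_le ?_ (by positivity)
    rintro x ⟨N, t, hmono, h0, hN, hx⟩
    set S : ℝ := ∑ i : Fin N, |Real.sin (n * Real.pi * t i.succ)
        - Real.sin (n * Real.pi * t i.castSucc)| ^ ((p:ℕ):ℝ) with hS
    have hSnn : 0 ≤ S := Finset.sum_nonneg fun i _ =>
      Real.rpow_nonneg (abs_nonneg _) _
    have hSle : S ≤ 2 ^ (p + 1) * n := by
      have step : ∀ i : Fin N,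
          |Real.sin (n * Real.pi * t i.succ) - Real.sin (n * Real.pi * t i.castSucc)| ^ ((p:ℕ):ℝ)
          ≤ 2 ^ (p - 1) * (n * Real.pi * (t i.succ - t i.castSucc)) := by
        intro i
        set a : ℝ := |Real.sin (n * Real.pi * t i.succ) - Real.sin (n * Real.pi * t i.castSucc)|
        have ha0 : 0 ≤ a := abs_nonneg _
        have ha2 : a ≤ 2 := by
          calc a ≤ |Real.sin (n * Real.pi * t i.succ)| + |Real.sin (n * Real.pi * t i.castSucc)| :=
                abs_sub _ _
            _ ≤ 1 + 1 := add_le_add (Real.abs_sin_le_one _) (Real.abs_sin_le_one _)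
            _ = 2 := by norm_num
        have hd : (0:ℝ) ≤ t i.succ - t i.castSucc :=
          sub_nonneg.2 (le_of_lt (hmono (Fin.castSucc_lt_succ (i := i))))
        have halip : a ≤ n * Real.pi * (t i.succ - t i.castSucc) := by
          have := abs_sin_sub_sin_le' (n * Real.pi * t i.succ) (n * Real.pi * t i.castSucc)
          calc a ≤ |n * Real.pi * t i.succ - n * Real.pi * t i.castSucc| := this
            _ = |(n * Real.pi) * (t i.succ - t i.castSucc)| := by ring_nf
            _ = (n * Real.pi) * (t i.succ - t i.castSucc) := by
                rw [abs_of_nonneg (by positivity |> fun h => mul_nonneg h hd)]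
          -- fallback handled below
        rw [Real.rpow_natCast]
        calc a ^ p = a ^ (p - 1) * a := by
              rw [← pow_succ]; congr 1; omega
          _ ≤ 2 ^ (p - 1) * a := by
              exact mul_le_mul_of_nonneg_right (pow_le_pow_left₀ ha0 ha2 _) ha0
          _ ≤ 2 ^ (p - 1) * (n * Real.pi * (t i.succ - t i.castSucc)) := by
              exact mul_le_mul_of_nonneg_left halip (by positivity)
      have tele : ∑ i : Fin N, (t i.succ - t i.castSucc) = 1 := by
        rw [fin_telescope_s1 t, hN, h0, sub_zero]
      calc S ≤ ∑ i : Fin N, 2 ^ (p - 1) * (n * Real.pi * (t i.succ - t i.castSucc)) :=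
            Finset.sum_le_sum fun i _ => step i
        _ = 2 ^ (p - 1) * (n * Real.pi) * ∑ i : Fin N, (t i.succ - t i.castSucc) := by
            rw [Finset.mul_sum]; congr 1; ext i; ring
        _ = 2 ^ (p - 1) * (n * Real.pi) := by rw [tele, mul_one]
        _ ≤ 2 ^ (p - 1) * (n * 4) := by
            refine mul_le_mul_of_nonneg_left ?_ (by positivity)
            exact mul_le_mul_of_nonneg_left Real.pi_le_four (by positivity)
        _ ≤ 2 ^ (p + 1) * n := le_of_eq (by
            rw [show p + 1 = (p - 1) + 2 from by omega, pow_add]; ring)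
    have hx4 : x ≤ 4 * B ^ ((1:ℝ)/p) := by
      rw [hx]
      have h1 : (∑ i : Fin N, |Real.sin (n * Real.pi * t i.succ)
          - Real.sin (n * Real.pi * t i.castSucc)| ^ ((p:ℕ):ℝ)) ^ ((1:ℝ)/p)
          ≤ ((4:ℝ) ^ p * B) ^ ((1:ℝ)/p) := by
        refine Real.rpow_le_rpow hSnn ?_ hip
        refine le_trans hSle ?_
        have h2 : (2:ℝ) ^ (p + 1) ≤ 4 ^ p := by
          have : (4:ℝ) ^ p = 2 ^ (2 * p) := by
            rw [pow_mul]; norm_num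
          rw [this]
          exact pow_le_pow_right₀ one_le_two (by omega)
        have hn1 : (1:ℝ) ≤ n := by exact_mod_cast hn
        calc (2:ℝ) ^ (p + 1) * n ≤ 4 ^ p * n :=
              mul_le_mul_of_nonneg_right h2 (by positivity)
          _ ≤ 4 ^ p * B := by
              refine mul_le_mul_of_nonneg_left ?_ (by positivity)
              rw [hB]
              have hpos : (0:ℝ) ≤ 1 / 2 ^ p := by positivity
              linarith
      have h3 : ((4:ℝ) ^ p * B) ^ ((1:ℝ)/p) = 4 * B ^ ((1:ℝ)/p) := by
        rw [Real.mul_rpow (by positivity) hBnn]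
        congr 1
        rw [← Real.rpow_natCast (4:ℝ) p, ← Real.rpow_mul (by norm_num),
          mul_one_div_cancel pne, Real.rpow_one]
      calc _ ≤ ((4:ℝ) ^ p * B) ^ ((1:ℝ)/p) := h1
        _ = 4 * B ^ ((1:ℝ)/p) := h3
    exact hx4
  refine ⟨key, le_trans key ?_⟩
  refine mul_le_mul_of_nonneg_left ?_ (by norm_num)
  refine Real.rpow_le_rpow hBnn ?_ hip
  rw [hB]
  have : (1:ℝ) ≤ 2 ^ p := by
    calc (1:ℝ) = 1 ^ p := (one_pow p).symm
      _ ≤ 2 ^ p := pow_le_pow_left₀ (by norm_num) one_le_two p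
  have h2p : (0:ℝ) < 2 ^ p := by positivity
  have : (1:ℝ) / 2 ^ p ≤ 1 := by
    rw [div_le_one h2p]; linarith
  linarith
end

section
/- Let b^H be a one-dimensional fBm with H ∈ (1/3,1/2), let b^H(m) denote its piecewise-linear dyadic interpolation at level m, and let w be an independent Brownian motion with interpolation w(m). Then E[|Σ_{k=1}^{2^m} (2^m ∫_{t_{k-1}^m}^{t_k^m} b^H(m)_u du − b^H_{t_{k-1}^m}) (w_{t_k^m} − w_{t_{k-1}^m})|²] ≤ C 2^{-2mH} for a constant C independent of m. -/
open MeasureTheory ProbabilityTheory Set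
open scoped ENNReal NNReal

noncomputable def dyadicInterp (m : ℕ) (f : ℝ → ℝ) (t : ℝ) : ℝ :=
  f ((⌊t * 2 ^ m⌋ : ℝ) / 2 ^ m) +
    (t * 2 ^ m - (⌊t * 2 ^ m⌋ : ℝ)) *
      (f (((⌊t * 2 ^ m⌋ : ℝ) + 1) / 2 ^ m) - f ((⌊t * 2 ^ m⌋ : ℝ) / 2 ^ m))

section helpers

lemma interp_step (m : ℕ) (k : ℕ) (f : ℝ → ℝ) :
    (2:ℝ)^m * (∫ u in Icc (((k:ℝ)-1)/2^m) ((k:ℝ)/2^m), dyadicInterp m f u) - f (((k:ℝ)-1)/2^m)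
      = (f ((k:ℝ)/2^m) - f (((k:ℝ)-1)/2^m)) / 2 := by
  have h2 : (0:ℝ) < 2^m := by positivity
  set A : ℝ := ((k:ℝ)-1)/2^m with hA
  set B : ℝ := (k:ℝ)/2^m with hB
  have hAB : A ≤ B := by
    rw [hA, hB]; gcongr; linarith
  set c₀ : ℝ := f A with hc0
  set c₁ : ℝ := f B - f A with hc1
  have key : ∫ u in Icc A B, dyadicInterp m f u
      = ∫ u in Icc A B, (c₀ + (u * 2^m - ((k:ℝ)-1)) * c₁) := by
    rw [integral_Icc_eq_integral_Ioc, integral_Ioc_eq_integral_Ioo,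
        integral_Icc_eq_integral_Ioc, integral_Ioc_eq_integral_Ioo]
    apply setIntegral_congr_fun measurableSet_Ioo
    intro u hu
    have hfl : ⌊u * 2^m⌋ = (k:ℤ) - 1 := by
      have hcast : ((((k:ℤ) - 1) : ℤ) : ℝ) = (k:ℝ) - 1 := by push_cast; ring
      rw [Int.floor_eq_iff]
      refine ⟨?_, ?_⟩
      · rw [hcast]
        calc ((k:ℝ)-1) = A * 2^m := by rw [hA]; field_simp
        _ ≤ u * 2^m := by nlinarith [hu.1]
      · rw [hcast]
        calc u * 2^m < B * 2^m := by nlinarith [hu.2]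
        _ = (k:ℝ) := by rw [hB]; field_simp
        _ = (k:ℝ) - 1 + 1 := by ring
    simp only [dyadicInterp, hfl]
    have hcast : ((((k:ℤ) - 1) : ℤ) : ℝ) = (k:ℝ) - 1 := by push_cast; ring
    rw [hcast]
    have : ((k:ℝ) - 1 + 1) = (k:ℝ) := by ring
    rw [this]
  rw [key]
  have intgr : ∫ u in Icc A B, (c₀ + (u * 2^m - ((k:ℝ)-1)) * c₁)
      = ∫ u in A..B, (c₀ + (u * 2^m - ((k:ℝ)-1)) * c₁) := by
    rw [intervalIntegral.integral_of_le hAB, integral_Icc_eq_integral_Ioc]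
  rw [intgr]
  have expand : ∀ u : ℝ, c₀ + (u * 2^m - ((k:ℝ)-1)) * c₁
      = (c₀ - ((k:ℝ)-1) * c₁) + (2^m * c₁) * u := by intro u; ring
  simp_rw [expand]
  rw [intervalIntegral.integral_add (intervalIntegrable_const) ?int1,
      intervalIntegral.integral_const, intervalIntegral.integral_const_mul, integral_id]
  case int1 =>
    exact (intervalIntegral.intervalIntegrable_id).const_mul _
  have hBA : B - A = ((k:ℝ) - ((k:ℝ)-1))/2^m := by rw [hA, hB]; ring
  have hB2A2 : B^2 - A^2 = (B-A)*(B+A) := by ring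
  have hBpA : B + A = ((k:ℝ) + ((k:ℝ)-1))/2^m := by rw [hA, hB]; ring
  rw [hB2A2, hBA, hBpA]
  rw [smul_eq_mul]
  field_simp
  ring


variable {Ω : Type*} [MeasurableSpace Ω] {P : Measure Ω}

lemma integrable_of_integral_ne_zero {f : Ω → ℝ} (h : ∫ ω, f ω ∂P ≠ 0) :
    Integrable f P := by
  by_contra hc; exact h (integral_undef hc)

lemma preimage_ae_eq' {f g : Ω → ℝ} (h : f =ᵐ[P] g) (S : Set ℝ) :
    f ⁻¹' S =ᵐ[P] g ⁻¹' S := by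
  filter_upwards [h] with ω hω
  show (f ω ∈ S) = (g ω ∈ S)
  rw [hω]

lemma lint_scale (ν : ℝ → ℝ≥0∞) (hν : Measurable ν) {c : ℝ} (hc : 0 < c) :
    ∫⁻ t in Ioi (0:ℝ), ν (c * t) = ENNReal.ofReal c⁻¹ * ∫⁻ t in Ioi (0:ℝ), ν t := by
  have hpre : (c * ·) ⁻¹' (Ioi (0:ℝ)) = Ioi 0 := by
    ext t; simp only [Set.mem_preimage, Set.mem_Ioi]
    constructor
    · intro h; nlinarith
    · intro h; positivity
  have h1 : ∫⁻ t in Ioi (0:ℝ), ν (c * t)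
      = ∫⁻ t, ν t ∂(Measure.map (c * ·) (volume.restrict (Ioi 0))) := by
    rw [lintegral_map hν (measurable_const_mul c)]
  rw [h1]
  have h2 : Measure.map (c * ·) (volume.restrict (Ioi (0:ℝ)))
      = (ENNReal.ofReal |c⁻¹| • volume).restrict (Ioi 0) := by
    rw [← Real.map_volume_mul_left (ne_of_gt hc)]
    rw [Measure.restrict_map (measurable_const_mul c) measurableSet_Ioi, hpre]
  rw [h2, Measure.restrict_smul, lintegral_smul_measure, abs_of_pos (by positivity), smul_eq_mul]

end helpers

section U
variable {Ω : Type*} [MeasurableSpace Ω]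

noncomputable def Ufun (b w : ℝ → Ω → ℝ) (m : ℕ) : Ω → ℝ := fun ω =>
  ∑ k ∈ Finset.Icc (1:ℕ) (2^m),
    (b ((k:ℝ)/2^m) ω - b (((k:ℝ)-1)/2^m) ω) *
      (w ((k:ℝ)/2^m) ω - (if 1 < k then w (((k:ℝ)-1)/2^m) ω else 0))

lemma integrable_of_integral_ne_zero' {P : Measure Ω} {f : Ω → ℝ} (h : ∫ ω, f ω ∂P ≠ 0) :
    Integrable f P := by
  by_contra hc; exact h (integral_undef hc)

lemma Ucalc (P : Measure Ω) [IsProbabilityMeasure P] (H : ℝ) (hH : 0 < H)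
    (b w : ℝ → Ω → ℝ)
    (hbcov : ∀ s u : ℝ, ∫ ω, (b u ω - b s ω) ^ 2 ∂P = |u - s| ^ (2 * H))
    (hw : ∀ s t : ℝ, 0 ≤ s → 0 ≤ t → ∫ ω, w t ω * w s ω ∂P = min s t)
    (hindep : IndepFun (fun ω => fun t => b t ω) (fun ω => fun t => w t ω) P)
    (m : ℕ) :
    Integrable (fun ω => (Ufun b w m ω)^2) P ∧
      ∫ ω, (Ufun b w m ω)^2 ∂P = ((1:ℝ)/2^m) ^ (2*H) := by
  have hm2 : (0:ℝ) < 2^m := by positivity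
  set t1 : ℕ → ℝ := fun k => (k:ℝ)/2^m with ht1
  set t0 : ℕ → ℝ := fun k => ((k:ℝ)-1)/2^m with ht0
  set I := Finset.Icc (1:ℕ) (2^m) with hI
  set D : ℕ → Ω → ℝ := fun k ω => b (t1 k) ω - b (t0 k) ω with hD
  set χ : ℕ → Ω → ℝ := fun k ω => if 1 < k then w (t0 k) ω else 0 with hχ
  set G : ℕ → Ω → ℝ := fun k ω => w (t1 k) ω - χ k ω with hG
  have hdiv : ∀ x y : ℝ, x ≤ y → x/2^m ≤ y/2^m := by
    intro x y h; gcongr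
  have ht1pos : ∀ k : ℕ, 1 ≤ k → 0 < t1 k := by
    intro k hk; rw [ht1]; have : (1:ℝ) ≤ (k:ℝ) := by exact_mod_cast hk
    positivity
  have ht0nonneg : ∀ k : ℕ, 1 ≤ k → 0 ≤ t0 k := by
    intro k hk; rw [ht0]; have : (1:ℝ) ≤ (k:ℝ) := by exact_mod_cast hk
    have h1 : (0:ℝ) ≤ (k:ℝ)-1 := by linarith
    positivity
  have ht0pos : ∀ k : ℕ, 1 < k → 0 < t0 k := by
    intro k hk; rw [ht0]; have : (2:ℝ) ≤ (k:ℝ) := by exact_mod_cast hk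
    have h1 : (0:ℝ) < (k:ℝ)-1 := by linarith
    positivity
  have ht01 : ∀ k : ℕ, t0 k ≤ t1 k := by
    intro k; rw [ht0, ht1]; exact hdiv _ _ (by linarith)
  have hstep : ∀ k : ℕ, t1 k - t0 k = 1/2^m := by
    intro k; rw [ht0, ht1]; field_simp; ring
  -- w side basic integrability
  have hIww : ∀ s t : ℝ, 0 < s → 0 < t → Integrable (fun ω => w t ω * w s ω) P := by
    intro s t hs ht
    apply integrable_of_integral_ne_zero'
    rw [hw s t hs.le ht.le]
    exact ne_of_gt (lt_min hs ht)
  -- b side integrability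
  have hIbb : ∀ s u : ℝ, Integrable (fun ω => (b u ω - b s ω)^2) P := by
    intro s u
    rcases eq_or_ne u s with h | h
    · subst h
      have : (fun ω => (b u ω - b u ω)^2) = fun _ => (0:ℝ) := by
        funext ω; ring
      rw [this]; exact integrable_const 0
    · apply integrable_of_integral_ne_zero'
      rw [hbcov s u]
      exact (Real.rpow_pos_of_pos (abs_pos.mpr (sub_ne_zero.mpr h)) _).ne'
  have hIDD : ∀ k j : ℕ, Integrable (fun ω => D k ω * D j ω) P := by
    intro k j
    have hpol : (fun ω => D k ω * D j ω) = fun ω =>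
        ((((b (t1 k) ω - b (t0 j) ω)^2 + (b (t1 j) ω - b (t0 k) ω)^2)
          - (b (t1 k) ω - b (t1 j) ω)^2) - (b (t0 k) ω - b (t0 j) ω)^2)/2 := by
      funext ω; simp only [hD]; ring
    rw [hpol]
    exact ((((hIbb _ _).add (hIbb _ _)).sub (hIbb _ _)).sub (hIbb _ _)).div_const 2
  have hEDD : ∀ k : ℕ, ∫ ω, D k ω * D k ω ∂P = ((1:ℝ)/2^m) ^ (2*H) := by
    intro k
    have h1 : (fun ω => D k ω * D k ω) = fun ω => (b (t1 k) ω - b (t0 k) ω)^2 := by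
      funext ω; simp only [hD]; ring
    rw [h1, hbcov (t0 k) (t1 k), hstep k, abs_of_pos (by positivity)]
  -- w with χ
  have hIwχ : ∀ s : ℝ, 0 < s → ∀ j : ℕ, 1 ≤ j →
      Integrable (fun ω => w s ω * χ j ω) P ∧ ∫ ω, w s ω * χ j ω ∂P = min (t0 j) s := by
    intro s hs j hj
    by_cases hj1 : 1 < j
    · have h1 : (fun ω => w s ω * χ j ω) = fun ω => w s ω * w (t0 j) ω := by
        funext ω; simp only [hχ, if_pos hj1]
      rw [h1]
      exact ⟨hIww (t0 j) s (ht0pos j hj1) hs, hw (t0 j) s (ht0pos j hj1).le hs.le⟩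
    · have hj' : j = 1 := le_antisymm (not_lt.mp hj1) hj
      subst hj'
      have h1 : (fun ω => w s ω * χ 1 ω) = fun _ => (0:ℝ) := by
        funext ω; simp only [hχ]; norm_num
      rw [h1]
      have ht00 : t0 1 = 0 := by rw [ht0]; norm_num
      rw [ht00]
      constructor
      · exact integrable_const 0
      · rw [integral_const]; simp [min_eq_left hs.le]
  have hIχχ : ∀ k j : ℕ, 1 ≤ k → 1 ≤ j →
      Integrable (fun ω => χ k ω * χ j ω) P ∧ ∫ ω, χ k ω * χ j ω ∂P = min (t0 j) (t0 k) := by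
    intro k j hk hj
    by_cases hk1 : 1 < k
    · have h1 : (fun ω => χ k ω * χ j ω) = fun ω => w (t0 k) ω * χ j ω := by
        funext ω; simp only [hχ, if_pos hk1]
      rw [h1]
      exact hIwχ (t0 k) (ht0pos k hk1) j hj
    · have hk' : k = 1 := le_antisymm (not_lt.mp hk1) hk
      subst hk'
      have h1 : (fun ω => χ 1 ω * χ j ω) = fun _ => (0:ℝ) := by
        funext ω; simp only [hχ]; norm_num
      rw [h1]
      have ht00 : t0 1 = 0 := by rw [ht0]; norm_num
      rw [ht00]
      constructor
      · exact integrable_const 0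
      · rw [integral_const]; simp [min_eq_right (ht0nonneg j hj)]
  -- G products
  have hGG : ∀ k j : ℕ, 1 ≤ k → 1 ≤ j →
      Integrable (fun ω => G k ω * G j ω) P ∧
      ∫ ω, G k ω * G j ω ∂P
        = min (t1 j) (t1 k) - min (t0 j) (t1 k) - min (t0 k) (t1 j) + min (t0 j) (t0 k) := by
    intro k j hk hj
    have A1I := hIww (t1 j) (t1 k) (ht1pos j hj) (ht1pos k hk)
    have A1E := hw (t1 j) (t1 k) (ht1pos j hj).le (ht1pos k hk).le
    have A2 := hIwχ (t1 k) (ht1pos k hk) j hj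
    have A3 := hIwχ (t1 j) (ht1pos j hj) k hk
    have A4 := hIχχ k j hk hj
    have hexp : (fun ω => G k ω * G j ω) = fun ω =>
        (((w (t1 k) ω * w (t1 j) ω - w (t1 k) ω * χ j ω) - w (t1 j) ω * χ k ω)
          + χ k ω * χ j ω) := by
      funext ω; simp only [hG]; ring
    have h12 : Integrable (fun ω => w (t1 k) ω * w (t1 j) ω - w (t1 k) ω * χ j ω) P :=
      A1I.sub A2.1
    have h123 : Integrable (fun ω => w (t1 k) ω * w (t1 j) ω - w (t1 k) ω * χ j ω
        - w (t1 j) ω * χ k ω) P := h12.sub A3.1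
    constructor
    · rw [hexp]
      exact h123.add A4.1
    · rw [hexp, integral_add h123 A4.1, integral_sub h12 A3.1, integral_sub A1I A2.1,
        A1E, A2.2, A3.2, A4.2]
  -- independence of pair products
  have hindpair : ∀ k j : ℕ,
      IndepFun (fun ω => D k ω * D j ω) (fun ω => G k ω * G j ω) P := by
    intro k j
    have hmχ : ∀ i : ℕ, Measurable (fun g : ℝ → ℝ => (if 1 < i then g (t0 i) else 0)) := by
      intro i
      by_cases h : 1 < i
      · simp only [if_pos h]; exact measurable_pi_apply _
      · simp only [if_neg h]; exact measurable_const
    have hφ : Measurable (fun f : ℝ → ℝ => (f (t1 k) - f (t0 k)) * (f (t1 j) - f (t0 j))) :=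
      (((measurable_pi_apply (t1 k)).sub (measurable_pi_apply (t0 k))).mul
        ((measurable_pi_apply (t1 j)).sub (measurable_pi_apply (t0 j))))
    have hψ : Measurable (fun g : ℝ → ℝ =>
        (g (t1 k) - (if 1 < k then g (t0 k) else 0)) *
        (g (t1 j) - (if 1 < j then g (t0 j) else 0))) :=
      ((measurable_pi_apply _).sub (hmχ k)).mul ((measurable_pi_apply _).sub (hmχ j))
    exact hindep.comp hφ hψ
  have hIprod : ∀ k j : ℕ, 1 ≤ k → 1 ≤ j →
      Integrable (fun ω => (D k ω * D j ω) * (G k ω * G j ω)) P := by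
    intro k j hk hj
    exact (hindpair k j).integrable_mul (hIDD k j) (hGG k j hk hj).1
  have hEprod : ∀ k j : ℕ, 1 ≤ k → 1 ≤ j →
      ∫ ω, (D k ω * D j ω) * (G k ω * G j ω) ∂P
        = (∫ ω, D k ω * D j ω ∂P) * ∫ ω, G k ω * G j ω ∂P := by
    intro k j hk hj
    exact (hindpair k j).integral_fun_mul_eq_mul_integral (hIDD k j).aestronglyMeasurable (hGG k j hk hj).1.aestronglyMeasurable
  -- the diagonal value of G products
  have hEGG : ∀ k ∈ I, ∀ j ∈ I,
      ∫ ω, G k ω * G j ω ∂P = if k = j then (1/2^m : ℝ) else 0 := by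
    intro k hkI j hjI
    have hk := (Finset.mem_Icc.mp hkI).1
    have hj := (Finset.mem_Icc.mp hjI).1
    rw [(hGG k j hk hj).2]
    rcases lt_trichotomy k j with hlt | heq | hgt
    · rw [if_neg (Nat.ne_of_lt hlt)]
      have h1 : t1 k ≤ t0 j := by
        rw [ht1, ht0]; apply hdiv
        have : (k:ℝ) + 1 ≤ (j:ℝ) := by exact_mod_cast hlt
        linarith
      have h2 : t1 k ≤ t1 j := le_trans h1 (ht01 j)
      have h3 : t0 k ≤ t1 j := le_trans (ht01 k) h2
      have h4 : t0 k ≤ t0 j := le_trans (ht01 k) h1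
      rw [min_eq_right h2, min_eq_right h1, min_eq_left h3, min_eq_right h4]
      ring
    · subst heq
      rw [if_pos rfl]
      simp only [min_self, min_eq_left (ht01 k)]
      have := hstep k; linarith
    · rw [if_neg (Nat.ne_of_gt hgt)]
      have h1 : t1 j ≤ t0 k := by
        rw [ht1, ht0]; apply hdiv
        have : (j:ℝ) + 1 ≤ (k:ℝ) := by exact_mod_cast hgt
        linarith
      have h2 : t1 j ≤ t1 k := le_trans h1 (ht01 k)
      have h3 : t0 j ≤ t1 k := le_trans (ht01 j) h2
      have h4 : t0 j ≤ t0 k := le_trans (ht01 j) h1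
      rw [min_eq_left h2, min_eq_left h3, min_eq_right h1, min_eq_left h4]
      ring
  -- expansion of U²
  have hUeq : ∀ ω, Ufun b w m ω = ∑ k ∈ I, D k ω * G k ω := by
    intro ω; rfl
  have hU2 : (fun ω => (Ufun b w m ω)^2)
      = fun ω => ∑ k ∈ I, ∑ j ∈ I, (D k ω * D j ω) * (G k ω * G j ω) := by
    funext ω
    rw [hUeq ω, sq, Finset.sum_mul_sum]
    apply Finset.sum_congr rfl; intro k _
    apply Finset.sum_congr rfl; intro j _
    ring
  constructor
  · rw [hU2]
    apply integrable_finset_sum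
    intro k hkI
    apply integrable_finset_sum
    intro j hjI
    exact hIprod k j (Finset.mem_Icc.mp hkI).1 (Finset.mem_Icc.mp hjI).1
  · rw [hU2]
    rw [integral_finset_sum _ (fun k hkI => integrable_finset_sum _
      (fun j hjI => hIprod k j (Finset.mem_Icc.mp hkI).1 (Finset.mem_Icc.mp hjI).1))]
    have hsum1 : ∀ k ∈ I, (∫ ω, ∑ j ∈ I, (D k ω * D j ω) * (G k ω * G j ω) ∂P)
        = ((1:ℝ)/2^m) ^ (2*H) * (1/2^m) := by
      intro k hkI
      have hk := (Finset.mem_Icc.mp hkI).1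
      rw [integral_finset_sum _
        (fun j hjI => hIprod k j hk (Finset.mem_Icc.mp hjI).1)]
      have : ∀ j ∈ I, ∫ ω, (D k ω * D j ω) * (G k ω * G j ω) ∂P
          = if k = j then ((∫ ω, D k ω * D k ω ∂P) * (1/2^m)) else 0 := by
        intro j hjI
        have hj := (Finset.mem_Icc.mp hjI).1
        rw [hEprod k j hk hj, hEGG k hkI j hjI]
        by_cases h : k = j
        · subst h; simp
        · simp [h]
      rw [Finset.sum_congr rfl this, Finset.sum_ite_eq I k
        (fun _ => (∫ ω, D k ω * D k ω ∂P) * (1/2^m)), if_pos hkI, hEDD k]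
    rw [Finset.sum_congr rfl hsum1, Finset.sum_const, hI, Nat.card_Icc]
    simp only [nsmul_eq_mul]
    have hcard : ((2^m + 1 - 1 : ℕ) : ℝ) = 2^m := by push_cast; ring
    rw [hcard]
    field_simp
end U


set_option maxHeartbeats 1000000 in
/-- For a one-dimensional fBm `b` with `H ∈ (1/3,1/2)`, its dyadic piecewise-linear
interpolation `b(m)`, and an independent Brownian motion `w`:
`E[|Σ_{k=1}^{2^m} (2^m ∫_{t_{k-1}^m}^{t_k^m} b(m)_u du - b_{t_{k-1}^m})(w_{t_k^m}-w_{t_{k-1}^m})|²]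
  ≤ C 2^{-2mH}` with `C` independent of `m`. -/
theorem stmt_9 {Ω : Type*} [MeasurableSpace Ω] (P : Measure Ω) [IsProbabilityMeasure P]
    (H : ℝ) (hH1 : 1 / 3 < H) (hH2 : H < 1 / 2) (b w : ℝ → Ω → ℝ)
    (hb0 : ∀ t, ∫ ω, b t ω ∂P = 0)
    (hbcov : ∀ s u : ℝ, ∫ ω, (b u ω - b s ω) ^ 2 ∂P = |u - s| ^ (2 * H))
    (hw : ∀ s t : ℝ, 0 ≤ s → 0 ≤ t → ∫ ω, w t ω * w s ω ∂P = min s t)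
    (hindep : IndepFun (fun ω => fun t => b t ω) (fun ω => fun t => w t ω) P) :
    ∃ C > (0 : ℝ), ∀ m : ℕ,
      ∫ ω, (∑ k ∈ Finset.Icc (1 : ℕ) (2 ^ m),
          ((2 : ℝ) ^ m *
              (∫ u in Set.Icc (((k : ℝ) - 1) / 2 ^ m) ((k : ℝ) / 2 ^ m),
                dyadicInterp m (fun t => b t ω) u) -
            b (((k : ℝ) - 1) / 2 ^ m) ω) *
          (w ((k : ℝ) / 2 ^ m) ω - w (((k : ℝ) - 1) / 2 ^ m) ω)) ^ 2 ∂P ≤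
        C * (2 : ℝ) ^ (-(2 * (m : ℝ) * H)) := by
  classical
  set G0 : Ω → ℝ := fun ω => (w 0 ω)^2 with hG0
  set ν : ℝ → ℝ≥0∞ := fun s => P (G0 ⁻¹' (Ioi s)) with hν
  have hν_anti : Antitone ν := by
    intro s t hst
    exact measure_mono (fun ω hω => lt_of_le_of_lt hst hω)
  have hν_meas : Measurable ν := hν_anti.measurable
  set κ := ∫⁻ s in Ioi (0:ℝ), ν s with hκ
  refine ⟨1 + 2 * κ.toReal, by positivity, ?_⟩
  intro m
  have hm2 : (0:ℝ) < 2^m := by positivity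
  set a : ℝ := ((1:ℝ)/2^m) ^ (2*H) with ha
  have hapos : 0 < a := Real.rpow_pos_of_pos (by positivity) _
  have hrhs : (2:ℝ) ^ (-(2 * (m:ℝ) * H)) = a := by
    rw [ha, one_div, ← Real.rpow_natCast 2 m, ← Real.rpow_neg (by norm_num : (0:ℝ) ≤ 2),
      ← Real.rpow_mul (by norm_num : (0:ℝ) ≤ 2)]
    congr 1
    ring
  rw [hrhs]
  set D : ℕ → Ω → ℝ := fun k ω => b ((k:ℝ)/2^m) ω - b (((k:ℝ)-1)/2^m) ω with hD
  set Y : Ω → ℝ := fun ω => ∑ k ∈ Finset.Icc (1:ℕ) (2^m),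
      D k ω * (w ((k:ℝ)/2^m) ω - w (((k:ℝ)-1)/2^m) ω) with hY
  have hpt : ∀ ω, (∑ k ∈ Finset.Icc (1 : ℕ) (2 ^ m),
          ((2 : ℝ) ^ m *
              (∫ u in Set.Icc (((k : ℝ) - 1) / 2 ^ m) ((k : ℝ) / 2 ^ m),
                dyadicInterp m (fun t => b t ω) u) -
            b (((k : ℝ) - 1) / 2 ^ m) ω) *
          (w ((k : ℝ) / 2 ^ m) ω - w (((k : ℝ) - 1) / 2 ^ m) ω)) = Y ω / 2 := by
    intro ω
    rw [hY, Finset.sum_div]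
    apply Finset.sum_congr rfl
    intro k _
    rw [interp_step m k (fun t => b t ω)]
    simp only [hD]
    ring
  have hfn : (fun ω => (∑ k ∈ Finset.Icc (1 : ℕ) (2 ^ m),
          ((2 : ℝ) ^ m *
              (∫ u in Set.Icc (((k : ℝ) - 1) / 2 ^ m) ((k : ℝ) / 2 ^ m),
                dyadicInterp m (fun t => b t ω) u) -
            b (((k : ℝ) - 1) / 2 ^ m) ω) *
          (w ((k : ℝ) / 2 ^ m) ω - w (((k : ℝ) - 1) / 2 ^ m) ω)) ^ 2)
      = fun ω => (Y ω)^2 / 4 := by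
    funext ω
    rw [hpt ω]
    ring
  rw [hfn]
  by_cases hIS : Integrable (fun ω => (Y ω)^2 / 4) P
  swap
  · rw [integral_undef hIS]
    positivity
  · have hIY2 : Integrable (fun ω => (Y ω)^2) P := by
      have h4 := hIS.const_mul 4
      have he : (fun ω => (Y ω)^2) = fun ω => 4 * ((Y ω)^2/4) := by funext ω; ring
      rw [he]; exact h4
    obtain ⟨hIU2, hEU2⟩ := Ucalc P H (by linarith) b w hbcov hw hindep m
    set U : Ω → ℝ := Ufun b w m with hU
    have hone : (1:ℕ) ∈ Finset.Icc (1:ℕ) (2^m) :=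
      Finset.mem_Icc.mpr ⟨le_refl 1, Nat.one_le_two_pow⟩
    have h00 : ((1:ℝ)-1)/2^m = 0 := by norm_num
    have hYU : ∀ ω, U ω - Y ω = D 1 ω * w 0 ω := by
      intro ω
      have hUev : U ω = ∑ k ∈ Finset.Icc (1:ℕ) (2^m),
          D k ω * (w ((k:ℝ)/2^m) ω - (if 1 < k then w (((k:ℝ)-1)/2^m) ω else 0)) := rfl
      rw [hUev, hY, ← Finset.sum_sub_distrib]
      rw [Finset.sum_eq_single_of_mem 1 hone]
      · simp only [show ¬((1:ℕ) < 1) from by norm_num, if_false, Nat.cast_one, h00]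
        ring
      · intro k hkmem hk1
        have hk' := (Finset.mem_Icc.mp hkmem).1
        have hk : 1 < k := by omega
        simp only [if_pos hk]
        ring
    set F : Ω → ℝ := fun ω => (D 1 ω)^2 with hF
    have hFnn : ∀ ω, 0 ≤ F ω := fun ω => sq_nonneg _
    have hEF' : ∫ ω, F ω ∂P = a := by
      have he : (fun ω => F ω) = fun ω => (b ((1:ℝ)/2^m) ω - b (((1:ℝ)-1)/2^m) ω)^2 := by
        funext ω; simp only [hF, hD, Nat.cast_one]
      have hd1 : |(1:ℝ)/2^m - ((1:ℝ)-1)/2^m| = 1/2^m := by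
        rw [h00, sub_zero, abs_of_pos (by positivity)]
      rw [he, hbcov, hd1, ha]
    have hIF : Integrable F P := by
      apply integrable_of_integral_ne_zero
      rw [hEF']; exact hapos.ne'
    have hIndFG : IndepFun F G0 P := by
      have hφ : Measurable (fun f : ℝ → ℝ => (f ((1:ℝ)/2^m) - f (((1:ℝ)-1)/2^m))^2) :=
        (((measurable_pi_apply ((1:ℝ)/2^m)).sub
          (measurable_pi_apply (((1:ℝ)-1)/2^m)))).pow_const 2
      have hψ : Measurable (fun g : ℝ → ℝ => (g 0)^2) :=
        (measurable_pi_apply _).pow_const 2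
      have hcomp := hindep.comp hφ hψ
      have heF : F = (fun f : ℝ → ℝ => (f ((1:ℝ)/2^m) - f (((1:ℝ)-1)/2^m))^2)
          ∘ (fun ω => fun t => b t ω) := by
        funext ω; simp only [hF, hD, Function.comp_apply, Nat.cast_one]
      have heG : G0 = (fun g : ℝ → ℝ => (g 0)^2) ∘ (fun ω => fun t => w t ω) := rfl
      rw [heF, heG]
      exact hcomp
    have hVsq : ∀ ω, F ω * G0 ω = (U ω - Y ω)^2 := by
      intro ω
      rw [hYU ω]
      simp only [hF, hG0]
      ring
    set p := P (F ⁻¹' (Ioi (a/2))) with hp'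
    have hp : p ≠ 0 := by
      intro h0
      have hae : ∀ᵐ ω ∂P, F ω ≤ a/2 := by
        rw [ae_iff]
        have he : {ω | ¬ F ω ≤ a/2} = F ⁻¹' (Ioi (a/2)) := by
          ext ω; simp [not_le, Set.mem_preimage]
        rw [he]; exact h0
      have hle := integral_mono_ae hIF (integrable_const (a/2)) hae
      rw [hEF', integral_const] at hle
      simp only [measure_univ, probReal_univ, ENNReal.toReal_one, smul_eq_mul, one_mul] at hle
      linarith
    -- tail-measure functions are measurable
    have hmeasU8 : Measurable (fun s : ℝ => P {ω | s < (8/a) * (U ω)^2}) :=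
      Antitone.measurable (fun s t hst => measure_mono fun ω hω => lt_of_le_of_lt hst hω)
    have hmeasY8 : Measurable (fun s : ℝ => P {ω | s < (8/a) * (Y ω)^2}) :=
      Antitone.measurable (fun s t hst => measure_mono fun ω hω => lt_of_le_of_lt hst hω)
    have hlayer : ∀ (f : Ω → ℝ), Integrable f P → (∀ ω, 0 ≤ f ω) →
        ∫⁻ s in Ioi (0:ℝ), P {ω | s < f ω} = ENNReal.ofReal (∫ ω, f ω ∂P) := by
      intro f hfi hfnn
      rw [← lintegral_eq_lintegral_meas_lt P (Filter.Eventually.of_forall hfnn) hfi.aemeasurable]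
      exact (ofReal_integral_eq_lintegral_ofReal hfi (Filter.Eventually.of_forall hfnn)).symm
    have hκfin : κ ≠ ⊤ := by
      have htail : ∀ s ∈ Ioi (0:ℝ), p * ν s
          ≤ P {ω | s < (8/a) * (U ω)^2} + P {ω | s < (8/a) * (Y ω)^2} := by
        intro s hs
        rw [Set.mem_Ioi] at hs
        have hsub : (F ⁻¹' (Ioi (a/2))) ∩ (G0 ⁻¹' (Ioi s))
            ⊆ {ω | s < (8/a) * (U ω)^2} ∪ {ω | s < (8/a) * (Y ω)^2} := by
          rintro ω ⟨h1, h2⟩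
          rw [Set.mem_preimage, Set.mem_Ioi] at h1 h2
          have hFG : (a/2) * s < F ω * G0 ω :=
            mul_lt_mul'' h1 h2 (by positivity) hs.le
          rw [hVsq ω] at hFG
          have hV2 : (U ω - Y ω)^2 ≤ 2*(U ω)^2 + 2*(Y ω)^2 := by
            nlinarith [sq_nonneg (U ω + Y ω)]
          by_contra hcon
          rw [Set.mem_union] at hcon
          push_neg at hcon
          obtain ⟨hc1, hc2⟩ := hcon
          rw [Set.mem_setOf_eq, not_lt] at hc1 hc2
          rw [div_mul_eq_mul_div, div_le_iff₀ hapos] at hc1 hc2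
          linarith
        calc p * ν s = P ((F ⁻¹' (Ioi (a/2))) ∩ (G0 ⁻¹' (Ioi s))) :=
              (hIndFG.measure_inter_preimage_eq_mul _ _ measurableSet_Ioi measurableSet_Ioi).symm
          _ ≤ P ({ω | s < (8/a) * (U ω)^2} ∪ {ω | s < (8/a) * (Y ω)^2}) := measure_mono hsub
          _ ≤ _ := measure_union_le _ _
      have hchain : p * κ ≤ ENNReal.ofReal (∫ ω, (8/a) * (U ω)^2 ∂P)
          + ENNReal.ofReal (∫ ω, (8/a) * (Y ω)^2 ∂P) := by
        calc p * κ = ∫⁻ s in Ioi (0:ℝ), p * ν s := by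
              rw [lintegral_const_mul p hν_meas, hκ]
          _ ≤ ∫⁻ s in Ioi (0:ℝ),
                (P {ω | s < (8/a) * (U ω)^2} + P {ω | s < (8/a) * (Y ω)^2}) :=
              setLIntegral_mono (hmeasU8.add hmeasY8) htail
          _ = (∫⁻ s in Ioi (0:ℝ), P {ω | s < (8/a) * (U ω)^2})
              + ∫⁻ s in Ioi (0:ℝ), P {ω | s < (8/a) * (Y ω)^2} := lintegral_add_left hmeasU8 _
          _ = _ := by
              rw [hlayer _ (hIU2.const_mul _) (fun ω => by positivity),
                hlayer _ (hIY2.const_mul _) (fun ω => by positivity)]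
      intro hκtop
      rw [hκtop, ENNReal.mul_top hp] at hchain
      exact (ENNReal.add_ne_top.mpr ⟨ENNReal.ofReal_ne_top, ENNReal.ofReal_ne_top⟩)
        (top_le_iff.mp hchain)
    -- the dyadic decomposition of F
    set A : ℤ → Set Ω := fun i => F ⁻¹' (Ioc ((2:ℝ)^i) ((2:ℝ)^(i+1))) with hA
    have hzpos : ∀ i : ℤ, (0:ℝ) < (2:ℝ)^i := fun i => zpow_pos (by norm_num) i
    have hmeasPU : Measurable (fun t : ℝ => P {ω | t < 4*(U ω)^2}) :=
      Antitone.measurable (fun s t hst => measure_mono fun ω hω => lt_of_le_of_lt hst hω)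
    have hmeasTerm : ∀ i : ℤ, Measurable (fun t : ℝ => P (A i) * ν ((2:ℝ)^(-(i+3)) * t)) :=
      fun i => (hν_meas.comp (measurable_const_mul _)).const_mul _
    have hcover : ∀ t ∈ Ioi (0:ℝ), P {ω | t < (Y ω)^2}
        ≤ P {ω | t < 4*(U ω)^2} + ∑' i : ℤ, P (A i) * ν ((2:ℝ)^(-(i+3)) * t) := by
      intro t ht
      rw [Set.mem_Ioi] at ht
      have hsub : {ω | t < (Y ω)^2} ⊆ {ω | t < 4*(U ω)^2}
          ∪ ⋃ i : ℤ, (A i ∩ (G0 ⁻¹' (Ioi ((2:ℝ)^(-(i+3)) * t)))) := by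
        intro ω hω
        rw [Set.mem_setOf_eq] at hω
        have hY2 : (Y ω)^2 ≤ 2*(U ω)^2 + 2*(F ω * G0 ω) := by
          rw [hVsq ω]; nlinarith [sq_nonneg (2*U ω - Y ω)]
        rcases lt_or_ge t (4*(U ω)^2) with h | h
        · exact Or.inl h
        · right
          have hFGpos : t/4 < F ω * G0 ω := by linarith
          have hFpos : 0 < F ω := by
            rcases (hFnn ω).lt_or_eq with h' | h'
            · exact h'
            · exfalso
              rw [← h', zero_mul] at hFGpos
              linarith
          obtain ⟨i, hi⟩ := exists_mem_Ioc_zpow hFpos one_lt_two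
          refine Set.mem_iUnion.mpr ⟨i, ⟨hi, ?_⟩⟩
          rw [Set.mem_preimage, Set.mem_Ioi]
          have hFle : F ω ≤ (2:ℝ)^(i+1) := hi.2
          have hG0nn : 0 ≤ G0 ω := sq_nonneg _
          have h8 : (2:ℝ)^(i+3) = 4 * (2:ℝ)^(i+1) := by
            rw [show i+3 = (i+1)+2 by ring, zpow_add₀ (by norm_num : (2:ℝ) ≠ 0)]
            norm_num
            ring
          have hkey : t < (2:ℝ)^(i+3) * G0 ω := by
            calc t = 4*(t/4) := by ring
            _ < 4*(F ω * G0 ω) := by linarith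
            _ ≤ 4*((2:ℝ)^(i+1) * G0 ω) := by nlinarith
            _ = (2:ℝ)^(i+3) * G0 ω := by rw [h8]; ring
          have h1 := mul_lt_mul_of_pos_left hkey (inv_pos.mpr (hzpos (i+3)))
          rw [← mul_assoc, inv_mul_cancel₀ (hzpos (i+3)).ne', one_mul] at h1
          rw [zpow_neg]
          exact h1
      calc P {ω | t < (Y ω)^2}
          ≤ P ({ω | t < 4*(U ω)^2}
            ∪ ⋃ i : ℤ, (A i ∩ (G0 ⁻¹' (Ioi ((2:ℝ)^(-(i+3)) * t))))) := measure_mono hsub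
        _ ≤ P {ω | t < 4*(U ω)^2}
            + P (⋃ i : ℤ, (A i ∩ (G0 ⁻¹' (Ioi ((2:ℝ)^(-(i+3)) * t))))) := measure_union_le _ _
        _ ≤ P {ω | t < 4*(U ω)^2}
            + ∑' i : ℤ, P (A i ∩ (G0 ⁻¹' (Ioi ((2:ℝ)^(-(i+3)) * t)))) :=
            add_le_add_right (measure_iUnion_le _) _
        _ = _ := by
            congr 1
            apply tsum_congr
            intro i
            exact hIndFG.measure_inter_preimage_eq_mul _ _ measurableSet_Ioc measurableSet_Ioi
    have hscale : ∀ i : ℤ, ∫⁻ t in Ioi (0:ℝ), P (A i) * ν ((2:ℝ)^(-(i+3)) * t)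
        = P (A i) * (ENNReal.ofReal ((2:ℝ)^(i+3)) * κ) := by
      intro i
      rw [lintegral_const_mul (P (A i))
          (show Measurable fun t : ℝ => ν ((2:ℝ)^(-(i+3)) * t) from
            hν_meas.comp (measurable_const_mul _)),
        lint_scale ν hν_meas (hzpos (-(i+3)))]
      congr 2
      rw [zpow_neg, inv_inv]
    -- the sum over the dyadic decomposition is bounded by `ofReal a`
    have hF's : AEStronglyMeasurable F P := hIF.1
    set F' : Ω → ℝ := hF's.mk F with hF'
    have hF'meas : Measurable F' := hF's.stronglyMeasurable_mk.measurable
    have hFae : F =ᵐ[P] F' := hF's.ae_eq_mk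
    have hAeq : ∀ i : ℤ, P (A i) = P (F' ⁻¹' (Ioc ((2:ℝ)^i) ((2:ℝ)^(i+1)))) :=
      fun i => measure_congr (preimage_ae_eq' hFae _)
    have hdisj : Pairwise (Function.onFun Disjoint
        (fun i : ℤ => F' ⁻¹' (Ioc ((2:ℝ)^i) ((2:ℝ)^(i+1))))) := by
      intro i j hij
      apply Disjoint.preimage
      rw [Set.Ioc_disjoint_Ioc]
      rcases hij.lt_or_gt with h | h
      · calc min ((2:ℝ)^(i+1)) ((2:ℝ)^(j+1)) ≤ (2:ℝ)^(i+1) := min_le_left _ _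
        _ ≤ (2:ℝ)^j := zpow_le_zpow_right₀ (by norm_num) (by omega)
        _ ≤ max ((2:ℝ)^i) ((2:ℝ)^j) := le_max_right _ _
      · calc min ((2:ℝ)^(i+1)) ((2:ℝ)^(j+1)) ≤ (2:ℝ)^(j+1) := min_le_right _ _
        _ ≤ (2:ℝ)^i := zpow_le_zpow_right₀ (by norm_num) (by omega)
        _ ≤ max ((2:ℝ)^i) ((2:ℝ)^j) := le_max_left _ _
    have hAsum : ∑' i : ℤ, ENNReal.ofReal ((2:ℝ)^i) * P (A i) ≤ ENNReal.ofReal a := by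
      have hstep1 : ∀ i : ℤ, ENNReal.ofReal ((2:ℝ)^i) * P (A i)
          ≤ ∫⁻ ω in F' ⁻¹' (Ioc ((2:ℝ)^i) ((2:ℝ)^(i+1))), ENNReal.ofReal (F' ω) ∂P := by
        intro i
        rw [hAeq i, ← setLIntegral_const]
        apply setLIntegral_mono (hF'meas.ennreal_ofReal)
        intro ω hω
        exact ENNReal.ofReal_le_ofReal (le_of_lt hω.1)
      calc ∑' i : ℤ, ENNReal.ofReal ((2:ℝ)^i) * P (A i)
          ≤ ∑' i : ℤ, ∫⁻ ω in F' ⁻¹' (Ioc ((2:ℝ)^i) ((2:ℝ)^(i+1))),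
              ENNReal.ofReal (F' ω) ∂P := ENNReal.tsum_le_tsum hstep1
        _ = ∫⁻ ω in ⋃ i : ℤ, F' ⁻¹' (Ioc ((2:ℝ)^i) ((2:ℝ)^(i+1))),
              ENNReal.ofReal (F' ω) ∂P :=
            (lintegral_iUnion (fun i => hF'meas measurableSet_Ioc) hdisj _).symm
        _ ≤ ∫⁻ ω, ENNReal.ofReal (F' ω) ∂P := lintegral_mono' Measure.restrict_le_self le_rfl
        _ = ∫⁻ ω, ENNReal.ofReal (F ω) ∂P := by
            apply lintegral_congr_ae
            filter_upwards [hFae] with ω hω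
            rw [hω]
        _ = ENNReal.ofReal (∫ ω, F ω ∂P) :=
            (ofReal_integral_eq_lintegral_ofReal hIF (Filter.Eventually.of_forall hFnn)).symm
        _ = ENNReal.ofReal a := by rw [hEF']
    -- putting it together
    have hmainint : ENNReal.ofReal (∫ ω, (Y ω)^2 ∂P)
        ≤ ENNReal.ofReal (4*a) + ENNReal.ofReal a * (ENNReal.ofReal 8 * κ) := by
      calc ENNReal.ofReal (∫ ω, (Y ω)^2 ∂P)
          = ∫⁻ t in Ioi (0:ℝ), P {ω | t < (Y ω)^2} :=
            (hlayer _ hIY2 (fun ω => sq_nonneg _)).symm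
        _ ≤ ∫⁻ t in Ioi (0:ℝ), (P {ω | t < 4*(U ω)^2}
              + ∑' i : ℤ, P (A i) * ν ((2:ℝ)^(-(i+3)) * t)) :=
            setLIntegral_mono (hmeasPU.add (Measurable.ennreal_tsum hmeasTerm)) hcover
        _ = (∫⁻ t in Ioi (0:ℝ), P {ω | t < 4*(U ω)^2})
              + ∫⁻ t in Ioi (0:ℝ), ∑' i : ℤ, P (A i) * ν ((2:ℝ)^(-(i+3)) * t) :=
            lintegral_add_left hmeasPU _
        _ = ENNReal.ofReal (4*a)
              + ∑' i : ℤ, P (A i) * (ENNReal.ofReal ((2:ℝ)^(i+3)) * κ) := by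
            rw [lintegral_tsum (fun i => (hmeasTerm i).aemeasurable)]
            congr 1
            · rw [hlayer _ (hIU2.const_mul _) (fun ω => by positivity)]
              congr 1
              rw [integral_const_mul, hEU2]
            · exact tsum_congr hscale
        _ = ENNReal.ofReal (4*a)
              + (∑' i : ℤ, ENNReal.ofReal ((2:ℝ)^i) * P (A i)) * (ENNReal.ofReal 8 * κ) := by
            congr 1
            rw [← ENNReal.tsum_mul_right]
            apply tsum_congr
            intro i
            have h8 : (2:ℝ)^(i+3) = (2:ℝ)^i * 8 := by
              rw [zpow_add₀ (by norm_num : (2:ℝ) ≠ 0)]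
              norm_num
            rw [h8, ENNReal.ofReal_mul (hzpos i).le]
            ring
        _ ≤ ENNReal.ofReal (4*a) + ENNReal.ofReal a * (ENNReal.ofReal 8 * κ) :=
            add_le_add_right (mul_le_mul_left hAsum _) _
    have hY2nn : 0 ≤ ∫ ω, (Y ω)^2 ∂P := integral_nonneg (fun ω => sq_nonneg _)
    have hRfin : ENNReal.ofReal (4*a) + ENNReal.ofReal a * (ENNReal.ofReal 8 * κ) ≠ ⊤ :=
      ENNReal.add_ne_top.mpr ⟨ENNReal.ofReal_ne_top,
        ENNReal.mul_ne_top ENNReal.ofReal_ne_top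
          (ENNReal.mul_ne_top ENNReal.ofReal_ne_top hκfin)⟩
    have hfinal : ∫ ω, (Y ω)^2 ∂P ≤ 4*a + a*(8*κ.toReal) := by
      have h1 := ENNReal.toReal_mono hRfin hmainint
      rw [ENNReal.toReal_ofReal hY2nn, ENNReal.toReal_add ENNReal.ofReal_ne_top
          (ENNReal.mul_ne_top ENNReal.ofReal_ne_top
            (ENNReal.mul_ne_top ENNReal.ofReal_ne_top hκfin)),
        ENNReal.toReal_mul, ENNReal.toReal_mul,
        ENNReal.toReal_ofReal (by linarith : (0:ℝ) ≤ 4*a),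
        ENNReal.toReal_ofReal hapos.le,
        ENNReal.toReal_ofReal (by norm_num : (0:ℝ) ≤ 8)] at h1
      linarith
    have hgoal : ∫ ω, (Y ω)^2 / 4 ∂P = (∫ ω, (Y ω)^2 ∂P) / 4 := integral_div 4 _
    rw [hgoal]
    have hκnn : 0 ≤ κ.toReal := ENNReal.toReal_nonneg
    have hfin2 : (1 + 2*κ.toReal) * a = a + 2*a*κ.toReal := by ring
    rw [hfin2]
    linarith
end
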